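/- arXiv:1705.04183 — 7 statements merged into one kernel-verified Lean document; each statement's English description precedes it below -/
import Mathlib

section
/- Let α be a rational number that is not zero or a negative integer, and write α = r/s with r, s coprime integers, s ≥ 1. Then the formal power series Σ_{n=0}^∞ (α)_n z^n, where (α)_n is the Pochhammer symbol, converges in ℚ_p at every z with |z|_p ≤ 1 whenever p does not divide s. -/
open Finset Filter

private lemma poch_prod (α : ℚ) (n : ℕ) :
    (ascPochhammer ℚ n).eval α = ∏ i ∈ range n, (α + i) := by
  induction n with
  | zero => simp
  | succ n ih =>
      rw [ascPochhammer_succ_right, Polynomial.eval_mul, ih, prod_range_succ]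
      simp

private lemma den_norm_one {p : ℕ} [Fact p.Prime] {α : ℚ} (hp : ¬ p ∣ α.den) :
    ‖((α.den : ℤ) : ℚ_[p])‖ = 1 := by
  refine le_antisymm (Padic.norm_int_le_one _) (not_lt.mp ?_)
  rw [Padic.norm_intCast_lt_one_iff]
  exact_mod_cast hp

private lemma term_cast {p : ℕ} [Fact p.Prime] (α : ℚ) (k : ℕ) :
    ((α + k : ℚ) : ℚ_[p]) =
      ((α.num + k * α.den : ℤ) : ℚ_[p]) / ((α.den : ℤ) : ℚ_[p]) := by
  have hd : (α.den : ℚ) ≠ 0 := by exact_mod_cast α.den_ne_zero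
  have h : (α + k : ℚ) = ((α.num + k * α.den : ℤ) : ℚ) / ((α.den : ℤ) : ℚ) := by
    rw [eq_div_iff (by exact_mod_cast α.den_ne_zero)]
    push_cast
    rw [add_mul]
    congr 1
    exact_mod_cast Rat.mul_den_eq_num α
  rw [h]
  push_cast
  ring

private lemma term_norm_le {p : ℕ} [Fact p.Prime] {α : ℚ} (hp : ¬ p ∣ α.den) (k : ℕ) :
    ‖((α + k : ℚ) : ℚ_[p])‖ ≤ 1 := by
  rw [term_cast, norm_div, den_norm_one hp, div_one]
  exact Padic.norm_int_le_one _

private lemma block_exists {p : ℕ} [hfp : Fact p.Prime] {α : ℚ} (hp : ¬ p ∣ α.den) (n : ℕ) :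
    ∃ k < p, ‖((α + (n + k : ℕ) : ℚ) : ℚ_[p])‖ ≤ (p : ℝ)⁻¹ := by
  haveI : NeZero p := ⟨hfp.out.ne_zero⟩
  have hs : ((α.den : ZMod p)) ≠ 0 := by
    rw [Ne, ZMod.natCast_eq_zero_iff]
    exact hp
  set t : ZMod p := (-(α.num) - n * α.den) * (α.den : ZMod p)⁻¹ with ht
  refine ⟨t.val, t.val_lt, ?_⟩
  have hdvd : (p : ℤ) ∣ (α.num + (n + t.val : ℕ) * α.den) := by
    rw [← ZMod.intCast_zmod_eq_zero_iff_dvd]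
    push_cast
    rw [ZMod.natCast_val, ZMod.cast_id, ht]
    field_simp
    ring
  rw [term_cast, norm_div, den_norm_one hp, div_one]
  have := (Padic.norm_int_le_pow_iff_dvd (α.num + (n + t.val : ℕ) * α.den) 1).mpr
    (by simpa using hdvd)
  simpa using this

private lemma prod_norm_le_one {p : ℕ} [Fact p.Prime] {α : ℚ} (hp : ¬ p ∣ α.den)
    (s : Finset ℕ) (f : ℕ → ℕ) :
    ‖∏ i ∈ s, ((α + (f i : ℕ) : ℚ) : ℚ_[p])‖ ≤ 1 := by
  rw [norm_prod]
  exact Finset.prod_le_one (fun i _ => norm_nonneg _) (fun i _ => term_norm_le hp _)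

private lemma main_bound {p : ℕ} [hfp : Fact p.Prime] {α : ℚ} (hp : ¬ p ∣ α.den) :
    ∀ n : ℕ, ‖∏ i ∈ range n, ((α + (i : ℕ) : ℚ) : ℚ_[p])‖ ≤ ((p : ℝ)⁻¹) ^ (n / p) := by
  have hppos : 0 < p := hfp.out.pos
  intro n
  induction n using Nat.strong_induction_on with
  | _ n ih =>
    by_cases hn : n < p
    · rw [Nat.div_eq_of_lt hn, pow_zero]
      exact prod_norm_le_one hp _ id
    · push_neg at hn
      set m := n - p with hm
      have hnm : n = m + p := by omega
      rw [hnm, prod_range_add, norm_mul]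
      obtain ⟨k, hk, hknorm⟩ := block_exists hp m
      have hblock : ‖∏ i ∈ range p, ((α + ((m + i : ℕ)) : ℚ) : ℚ_[p])‖ ≤ (p : ℝ)⁻¹ := by
        rw [norm_prod, ← Finset.prod_erase_mul _ _ (Finset.mem_range.mpr hk)]
        have h1 : ∏ i ∈ (range p).erase k, ‖((α + ((m + i : ℕ)) : ℚ) : ℚ_[p])‖ ≤ 1 :=
          Finset.prod_le_one (fun i _ => norm_nonneg _) (fun i _ => term_norm_le hp _)
        calc (∏ i ∈ (range p).erase k, ‖((α + ((m + i : ℕ)) : ℚ) : ℚ_[p])‖) *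
              ‖((α + ((m + k : ℕ)) : ℚ) : ℚ_[p])‖
            ≤ 1 * (p : ℝ)⁻¹ := by
              apply mul_le_mul h1 hknorm (norm_nonneg _)
              exact zero_le_one
          _ = (p : ℝ)⁻¹ := one_mul _
      have hIH := ih m (by omega)
      have hdiv : (m + p) / p = m / p + 1 := by
        rw [Nat.add_div_right _ hppos]
      rw [hdiv, pow_succ]
      have h2 : (0:ℝ) ≤ ‖∏ i ∈ range m, ((α + (i : ℕ) : ℚ) : ℚ_[p])‖ := norm_nonneg _
      refine mul_le_mul hIH hblock (norm_nonneg _) ?_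
      positivity

theorem stmt_4 (α : ℚ) (hα : ∀ k : ℕ, α ≠ -(k : ℚ)) (p : ℕ) [Fact p.Prime]
    (hp : ¬ p ∣ α.den) (z : ℚ_[p]) (hz : ‖z‖ ≤ 1) :
    Filter.Tendsto
      (fun n : ℕ => (((ascPochhammer ℚ n).eval α : ℚ) : ℚ_[p]) * z ^ n)
      Filter.atTop (nhds 0) := by
  have hppos : 0 < p := (Fact.out : p.Prime).pos
  have hp1 : (1:ℝ) < p := by exact_mod_cast (Fact.out : p.Prime).one_lt
  rw [tendsto_zero_iff_norm_tendsto_zero]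
  apply squeeze_zero (fun n => norm_nonneg _)
    (g := fun n => ((p : ℝ)⁻¹) ^ (n / p))
  · intro n
    rw [norm_mul]
    have h1 : ‖(((ascPochhammer ℚ n).eval α : ℚ) : ℚ_[p])‖ ≤ ((p : ℝ)⁻¹) ^ (n / p) := by
      rw [poch_prod, Rat.cast_prod]
      exact main_bound hp n
    have h2 : ‖z ^ n‖ ≤ 1 := by
      rw [norm_pow]
      exact pow_le_one₀ (norm_nonneg _) hz
    calc ‖(((ascPochhammer ℚ n).eval α : ℚ) : ℚ_[p])‖ * ‖z ^ n‖
        ≤ ((p : ℝ)⁻¹) ^ (n / p) * 1 :=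
          mul_le_mul h1 h2 (norm_nonneg _) (by positivity)
      _ = ((p : ℝ)⁻¹) ^ (n / p) := mul_one _
  · have hlt : (p : ℝ)⁻¹ < 1 := inv_lt_one_of_one_lt₀ hp1
    have hge : (0:ℝ) ≤ (p : ℝ)⁻¹ := by positivity
    have hdivtop : Tendsto (fun n : ℕ => n / p) atTop atTop := by
      apply tendsto_atTop_atTop.mpr
      intro b
      exact ⟨b * p, fun n hn => Nat.le_div_iff_mul_le hppos |>.mpr hn⟩
    exact (tendsto_pow_atTop_nhds_zero_of_lt_one hge hlt).comp hdivtop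
end

section
/- Let α = r/s with r ∈ ℤ, s ≥ 1, gcd(r,s) = 1, and α not a negative integer or 0. Write (α+1)_n / n! = u_n / v_n in lowest terms with v_n ≥ 1. Then v_n divides s^{2n}, and u_n divides ∏_{p ∤ s} p^{⌊log(|r| + s n)/log p⌋} (product over primes p not dividing s). -/
open Finset



lemma mod_div_succ (n m : ℕ) (hm : 1 < m) :
    ((n+1) % m = n % m + 1 ∧ (n+1)/m = n/m ∧ n % m + 1 < m)
    ∨ (n % m + 1 = m ∧ (n+1) % m = 0 ∧ (n+1)/m = n/m + 1) := by
  have h := Nat.mod_lt n (show 0 < m by omega)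
  have hmod : (n+1) % m = (n % m + 1) % m := by
    conv_lhs => rw [Nat.add_mod, Nat.mod_eq_of_lt hm]
  have hdiv : (n+1) / m = n / m + if m ∣ n + 1 then 1 else 0 := Nat.succ_div
  rcases Nat.lt_or_ge (n % m + 1) m with h1 | h1
  · left
    have e : (n+1) % m = n % m + 1 := by rw [hmod, Nat.mod_eq_of_lt h1]
    have hnd : ¬ m ∣ n + 1 := by rw [Nat.dvd_iff_mod_eq_zero]; omega
    rw [if_neg hnd] at hdiv
    exact ⟨e, by omega, h1⟩
  · right
    have h1 : n % m + 1 = m := by omega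
    have e : (n+1) % m = 0 := by rw [hmod, h1, Nat.mod_self]
    have hd : m ∣ n + 1 := by rwa [Nat.dvd_iff_mod_eq_zero]
    rw [if_pos hd] at hdiv
    exact ⟨h1, e, by omega⟩

lemma count_residue (m c : ℕ) (hm : 0 < m) (hc : c < m) (n : ℕ) :
    ((Finset.Icc 1 n).filter (fun i => i % m = c)).card
      = n / m + (if c ≠ 0 ∧ c ≤ n % m then 1 else 0) := by
  rcases eq_or_lt_of_le (Nat.succ_le_of_lt hm) with hm1 | hm1
  · have hm1 : m = 1 := hm1.symm
    subst hm1
    have hc0 : c = 0 := by omega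
    subst hc0
    simp [Nat.mod_one]
  · induction n with
    | zero => simp
    | succ n ih =>
      have h1 : Finset.Icc 1 (n+1) = insert (n+1) (Finset.Icc 1 n) := by
        ext i; simp [Finset.mem_Icc, Finset.mem_insert]; omega
      rw [h1, Finset.filter_insert]
      rcases mod_div_succ n m hm1 with ⟨e1, e2, e3⟩ | ⟨e1, e2, e3⟩ <;>
        by_cases hd : (n+1) % m = c
      · rw [if_pos hd, Finset.card_insert_of_notMem (by simp), ih, e2]
        split_ifs <;> omega
      · rw [if_neg hd, ih, e2]
        split_ifs <;> omega
      · rw [if_pos hd, Finset.card_insert_of_notMem (by simp), ih, e3]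
        split_ifs <;> omega
      · rw [if_neg hd, ih, e3]
        split_ifs <;> omega


lemma exists_residue (r : ℤ) (s m : ℕ) (hm : 0 < m) (hco : Nat.Coprime s m) :
    ∃ c < m, ∀ i : ℕ, ((m : ℤ) ∣ r + s * i ↔ i % m = c) := by
  haveI : NeZero m := ⟨hm.ne'⟩
  have hu : IsUnit (s : ZMod m) := (ZMod.isUnit_iff_coprime s m).mpr hco
  obtain ⟨u, hu⟩ := hu
  refine ⟨(((u⁻¹ : (ZMod m)ˣ) : ZMod m) * (-(r : ZMod m))).val, ZMod.val_lt _, fun i => ?_⟩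
  have key : ∀ j : ZMod m, (j = ((u⁻¹ : (ZMod m)ˣ) : ZMod m) * (-(r : ZMod m))
      ↔ (r : ZMod m) + (s : ZMod m) * j = 0) := by
    intro j
    rw [Units.eq_inv_mul_iff_mul_eq, hu]
    constructor <;> intro h <;> linear_combination h
  rw [← ZMod.intCast_zmod_eq_zero_iff_dvd]
  push_cast
  rw [← key]
  constructor
  · intro h
    rw [← h, ZMod.val_natCast]
  · intro h
    have := congrArg (fun x : ℕ => (x : ZMod m)) h
    simpa [ZMod.natCast_val, ZMod.cast_id] using this



lemma fact_eq_count {p : ℕ} (hp : p.Prime) {t b : ℕ} (ht : t ≠ 0) (hb : t < p ^ b) :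
    t.factorization p = ((Finset.Icc 1 b).filter (fun k => p ^ k ∣ t)).card := by
  have hvb : t.factorization p < b := by
    have h1 : p ^ t.factorization p ∣ t := Nat.ordProj_dvd t p
    have h2 : p ^ t.factorization p ≤ t := Nat.le_of_dvd (Nat.pos_of_ne_zero ht) h1
    exact (Nat.pow_lt_pow_iff_right hp.one_lt).mp (lt_of_le_of_lt h2 hb)
  have hset : (Finset.Icc 1 b).filter (fun k => p ^ k ∣ t)
      = Finset.Icc 1 (t.factorization p) := by
    ext k
    simp only [Finset.mem_filter, Finset.mem_Icc,
      hp.pow_dvd_iff_le_factorization ht]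
    omega
  rw [hset, Nat.card_Icc]
  omega

lemma val_prod_eq (r : ℤ) (s n p b : ℕ) (hp : p.Prime)
    (hnz : ∀ i ∈ Finset.Icc 1 n, r + s * (i : ℕ) ≠ 0)
    (hb : ∀ i ∈ Finset.Icc 1 n, (r + s * (i : ℕ)).natAbs < p ^ b) :
    (∏ i ∈ Finset.Icc 1 n, (r + s * (i : ℕ)).natAbs).factorization p
      = ∑ k ∈ Finset.Icc 1 b,
          ((Finset.Icc 1 n).filter (fun i => p ^ k ∣ (r + s * (i : ℕ)).natAbs)).card := by
  rw [Nat.factorization_prod (fun i hi => Int.natAbs_ne_zero.mpr (hnz i hi))]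
  rw [Finsupp.finset_sum_apply]
  have : ∀ i ∈ Finset.Icc 1 n, ((r + s * (i : ℕ)).natAbs).factorization p
      = ((Finset.Icc 1 b).filter (fun k => p ^ k ∣ (r + s * (i : ℕ)).natAbs)).card := by
    intro i hi
    exact fact_eq_count hp (Int.natAbs_ne_zero.mpr (hnz i hi)) (hb i hi)
  rw [Finset.sum_congr rfl this]
  simp only [Finset.card_filter]
  exact Finset.sum_comm

theorem lower_bound (r : ℤ) (s n : ℕ) (hs : 1 ≤ s) (hr : r ≠ 0) (hcop : Int.gcd r s = 1)
    (hnz : ∀ i ∈ Finset.Icc 1 n, r + s * (i : ℕ) ≠ 0) :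
    n.factorial ∣ (∏ i ∈ Finset.Icc 1 n, (r + s * (i : ℕ)).natAbs) * s ^ n := by
  set T := ∏ i ∈ Finset.Icc 1 n, (r + s * (i : ℕ)).natAbs with hT
  have hTnz : T ≠ 0 := by
    rw [hT]
    exact Finset.prod_ne_zero_iff.mpr (fun i hi => Int.natAbs_ne_zero.mpr (hnz i hi))
  have hspos : 0 < s := hs
  have hrhs : T * s ^ n ≠ 0 := by positivity
  rw [← Nat.factorization_le_iff_dvd (Nat.factorial_ne_zero n) hrhs, Finsupp.le_def]
  intro p
  by_cases hp : p.Prime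
  · haveI : Fact p.Prime := ⟨hp⟩
    set M := r.natAbs + s * n with hM
    have hM1 : 1 ≤ M := by
      have := Int.natAbs_pos.mpr hr; omega
    have hfac : (T * s ^ n).factorization p = T.factorization p + n * s.factorization p := by
      rw [Nat.factorization_mul hTnz (by positivity), Nat.factorization_pow]
      simp [mul_comm]
    rw [hfac]
    by_cases hps : p ∣ s
    · have h1 : 1 ≤ s.factorization p :=
        hp.factorization_pos_of_dvd (by omega) hps
      have h2 : n.factorial.factorization p ≤ n := by
        rw [Nat.factorization_def _ hp]
        calc padicValNat p n.factorial ≤ (p - 1) * padicValNat p n.factorial :=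
              Nat.le_mul_of_pos_left _ (by have := hp.two_le; omega)
          _ = n - (p.digits n).sum := sub_one_mul_padicValNat_factorial n
          _ ≤ n := Nat.sub_le _ _
      have h3 := Nat.mul_le_mul_left n h1
      omega
    · set b := Nat.log p M + 1 with hb
      have hMb : M < p ^ b := Nat.lt_pow_succ_log_self hp.one_lt M
      have htle : ∀ i ∈ Finset.Icc 1 n, (r + s * (i : ℕ)).natAbs ≤ M := by
        intro i hi
        simp only [Finset.mem_Icc] at hi
        calc (r + s * (i : ℕ)).natAbs ≤ r.natAbs + ((s * i : ℕ) : ℤ).natAbs :=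
              Int.natAbs_add_le _ _
          _ = r.natAbs + s * i := by rw [Int.natAbs_natCast]
          _ ≤ M := by have := Nat.mul_le_mul_left s hi.2; omega
      have hbnd : ∀ i ∈ Finset.Icc 1 n, (r + s * (i : ℕ)).natAbs < p ^ b :=
        fun i hi => lt_of_le_of_lt (htle i hi) hMb
      have hnM : n ≤ M := by
        have : 1 * n ≤ s * n := Nat.mul_le_mul_right n hs
        omega
      have hleg : n.factorial.factorization p = ∑ k ∈ Finset.Icc 1 b, n / p ^ k := by
        rw [Nat.factorization_def _ hp, ← Finset.Ico_add_one_right_eq_Icc]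
        refine padicValNat_factorial ?_
        have := Nat.log_mono_right (b := p) hnM
        omega
      rw [hleg, val_prod_eq r s n p b hp hnz hbnd]
      refine le_trans (Finset.sum_le_sum ?_) (Nat.le_add_right _ _)
      intro k hk
      simp only [Finset.mem_Icc] at hk
      have hmk : 0 < p ^ k := pow_pos hp.pos k
      have hco : Nat.Coprime s (p ^ k) :=
        Nat.Coprime.pow_right k ((hp.coprime_iff_not_dvd.mpr hps).symm)
      obtain ⟨c, hc, hiff⟩ := exists_residue r s (p ^ k) hmk hco
      have hfe : ∀ i ∈ Finset.Icc 1 n,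
          (p ^ k ∣ (r + s * (i : ℕ)).natAbs) ↔ (i % p ^ k = c) := by
        intro i _
        rw [← hiff i, Int.natCast_dvd]
      rw [Finset.filter_congr hfe, count_residue _ _ hmk hc]
      omega
  · simp [Nat.factorization_eq_zero_of_not_prime _ hp]

theorem upper_bound (r : ℤ) (s n : ℕ) (hs : 1 ≤ s) (hr : r ≠ 0) (p : ℕ)
    (hp : p.Prime) (hps : ¬ p ∣ s)
    (hnz : ∀ i ∈ Finset.Icc 1 n, r + s * (i : ℕ) ≠ 0) :
    (∏ i ∈ Finset.Icc 1 n, (r + s * (i : ℕ)).natAbs).factorization p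
      ≤ n.factorial.factorization p + Nat.log p (r.natAbs + s * n) := by
  haveI : Fact p.Prime := ⟨hp⟩
  set M := r.natAbs + s * n with hM
  set L := Nat.log p M with hL
  set b := L + 1 with hb
  have hMb : M < p ^ b := Nat.lt_pow_succ_log_self hp.one_lt M
  have htle : ∀ i ∈ Finset.Icc 1 n, (r + s * (i : ℕ)).natAbs ≤ M := by
    intro i hi
    simp only [Finset.mem_Icc] at hi
    calc (r + s * (i : ℕ)).natAbs ≤ r.natAbs + ((s * i : ℕ) : ℤ).natAbs :=
          Int.natAbs_add_le _ _
      _ = r.natAbs + s * i := by rw [Int.natAbs_natCast]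
      _ ≤ M := by have := Nat.mul_le_mul_left s hi.2; omega
  have hbnd : ∀ i ∈ Finset.Icc 1 n, (r + s * (i : ℕ)).natAbs < p ^ b :=
    fun i hi => lt_of_le_of_lt (htle i hi) hMb
  have hnM : n ≤ M := by
    have : 1 * n ≤ s * n := Nat.mul_le_mul_right n hs
    have := Int.natAbs_pos.mpr hr
    omega
  have hleg : n.factorial.factorization p = ∑ k ∈ Finset.Icc 1 b, n / p ^ k := by
    rw [Nat.factorization_def _ hp, ← Finset.Ico_add_one_right_eq_Icc]
    refine padicValNat_factorial ?_
    have := Nat.log_mono_right (b := p) hnM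
    omega
  rw [val_prod_eq r s n p b hp hnz hbnd]
  have hsplit : ∀ f : ℕ → ℕ, ∑ k ∈ Finset.Icc 1 b, f k = (∑ k ∈ Finset.Icc 1 L, f k) + f b := by
    intro f
    rw [hb, ← Finset.sum_Icc_succ_top (by omega : 1 ≤ L + 1)]
  rw [hsplit]
  have hzero : ((Finset.Icc 1 n).filter (fun i => p ^ b ∣ (r + s * (i : ℕ)).natAbs)).card = 0 := by
    rw [Finset.card_eq_zero, Finset.filter_eq_empty_iff]
    intro i hi hdvd
    have h1 : p ^ b ≤ (r + s * (i : ℕ)).natAbs :=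
      Nat.le_of_dvd (Int.natAbs_pos.mpr (hnz i hi)) hdvd
    have := htle i hi
    omega
  rw [hzero, add_zero, hleg, hsplit]
  have hstep : ∀ k ∈ Finset.Icc 1 L,
      ((Finset.Icc 1 n).filter (fun i => p ^ k ∣ (r + s * (i : ℕ)).natAbs)).card
        ≤ n / p ^ k + 1 := by
    intro k hk
    have hmk : 0 < p ^ k := pow_pos hp.pos k
    have hco : Nat.Coprime s (p ^ k) :=
      Nat.Coprime.pow_right k ((hp.coprime_iff_not_dvd.mpr hps).symm)
    obtain ⟨c, hc, hiff⟩ := exists_residue r s (p ^ k) hmk hco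
    have hfe : ∀ i ∈ Finset.Icc 1 n,
        (p ^ k ∣ (r + s * (i : ℕ)).natAbs) ↔ (i % p ^ k = c) := by
      intro i _
      rw [← hiff i, Int.natCast_dvd]
    rw [Finset.filter_congr hfe, count_residue _ _ hmk hc]
    split_ifs <;> omega
  calc ∑ k ∈ Finset.Icc 1 L,
        ((Finset.Icc 1 n).filter (fun i => p ^ k ∣ (r + s * (i : ℕ)).natAbs)).card
      ≤ ∑ k ∈ Finset.Icc 1 L, (n / p ^ k + 1) := Finset.sum_le_sum hstep
    _ = (∑ k ∈ Finset.Icc 1 L, n / p ^ k) + L := by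
        rw [Finset.sum_add_distrib, Finset.sum_const, Nat.card_Icc, smul_eq_mul]
        simp
    _ ≤ ((∑ k ∈ Finset.Icc 1 L, n / p ^ k) + n / p ^ b) + L :=
        Nat.add_le_add_right (Nat.le_add_right _ _) L

lemma asc_eval (x : ℚ) (n : ℕ) :
    (ascPochhammer ℚ n).eval x = ∏ i ∈ Finset.range n, (x + i) := by
  induction n with
  | zero => simp
  | succ n ih => rw [ascPochhammer_succ_eval, ih, Finset.prod_range_succ]

theorem stmt_5 (r : ℤ) (s : ℕ) (hs : 1 ≤ s) (hcop : Int.gcd r s = 1)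
    (hα : ∀ k : ℕ, (r : ℚ) / s ≠ -(k : ℚ)) (n : ℕ) :
    ((ascPochhammer ℚ n).eval ((r : ℚ) / s + 1) / n.factorial).den ∣ s ^ (2 * n) ∧
    ((ascPochhammer ℚ n).eval ((r : ℚ) / s + 1) / n.factorial).num ∣
      ∏ p ∈ Finset.filter (fun p => Nat.Prime p ∧ ¬ p ∣ s)
          (Finset.range (r.natAbs + s * n + 1)),
        (p : ℤ) ^ Nat.log p (r.natAbs + s * n) := by
  have hs0 : (s : ℚ) ≠ 0 := by positivity
  have hr : r ≠ 0 := by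
    intro h
    exact hα 0 (by simp [h])
  have hnz : ∀ i ∈ Finset.Icc 1 n, r + s * (i : ℕ) ≠ 0 := by
    intro i _ h
    have h2 : (r : ℚ) + (s : ℚ) * (i : ℚ) = 0 := by exact_mod_cast h
    apply hα i
    rw [div_eq_iff hs0]
    linarith
  set P : ℤ := ∏ i ∈ Finset.Icc 1 n, (r + s * (i : ℕ)) with hP
  set T : ℕ := ∏ i ∈ Finset.Icc 1 n, (r + s * (i : ℕ)).natAbs with hT
  have hTP : P.natAbs = T := by
    rw [hP, hT]
    exact map_prod Int.natAbsHom _ _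
  have hPnz : P ≠ 0 := by
    rw [hP]
    exact Finset.prod_ne_zero_iff.mpr hnz
  have hTnz : T ≠ 0 := by rw [← hTP]; exact Int.natAbs_ne_zero.mpr hPnz
  set q : ℚ := (ascPochhammer ℚ n).eval ((r : ℚ) / s + 1) / n.factorial with hq
  set D : ℤ := (s : ℤ) ^ n * n.factorial with hD
  have hDnz : D ≠ 0 := by
    rw [hD]; positivity
  have hqPD : q = (P : ℚ) / (D : ℚ) := by
    rw [hq, asc_eval]
    have h1 : ∀ i ∈ Finset.range n, ((r : ℚ) / s + 1 + i) = ((r + s * ((i+1) : ℕ) : ℤ) : ℚ) / s := by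
      intro i _
      field_simp
      push_cast
      ring
    rw [Finset.prod_congr rfl h1, Finset.prod_div_distrib, Finset.prod_const,
      Finset.card_range]
    have h2 : ∏ i ∈ Finset.range n, ((r + s * ((i+1) : ℕ) : ℤ) : ℚ)
        = ((∏ i ∈ Finset.Icc 1 n, (r + s * (i : ℕ)) : ℤ) : ℚ) := by
      push_cast
      rw [← Finset.Ico_add_one_right_eq_Icc, Finset.prod_Ico_eq_prod_range]
      simp [add_comm 1]
    rw [h2, ← hP, hD]
    push_cast
    ring
  -- denominator part
  have hfd : n.factorial ∣ T * s ^ n := lower_bound r s n hs hr hcop hnz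
  have hfdz : (n.factorial : ℤ) ∣ P * (s : ℤ) ^ n := by
    rw [Int.natCast_dvd, Int.natAbs_mul, hTP, Int.natAbs_pow, Int.natAbs_natCast]
    exact hfd
  obtain ⟨A, hA⟩ := hfdz
  have hqA : q = (A : ℚ) / (((s : ℤ) ^ (2 * n) : ℤ) : ℚ) := by
    rw [hqPD, hD]
    have hA' : (P : ℚ) * (s : ℚ) ^ n = (n.factorial : ℚ) * (A : ℚ) := by
      exact_mod_cast congrArg (fun z : ℤ => (z : ℚ)) hA
    have hf0 : (n.factorial : ℚ) ≠ 0 := by positivity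
    push_cast
    rw [div_eq_div_iff (by positivity) (by positivity), two_mul, pow_add]
    linear_combination ((s : ℚ)) ^ n * hA'
  have hden : q.den ∣ s ^ (2 * n) := by
    have h1 : ((q.den : ℤ)) ∣ (s : ℤ) ^ (2 * n) := by
      rw [hqA, ← Rat.divInt_eq_div]
      exact Rat.den_dvd A _
    rw [← Int.natAbs_dvd_natAbs, Int.natAbs_pow, Int.natAbs_natCast, Int.natAbs_natCast] at h1
    exact h1
  refine ⟨hden, ?_⟩
  -- numerator part
  have hnum : q.num ∣ P := by
    rw [hqPD, ← Rat.divInt_eq_div]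
    exact Rat.num_dvd P hDnz
  have hqnz : q ≠ 0 := by
    rw [hqPD]
    exact div_ne_zero (by exact_mod_cast hPnz) (by exact_mod_cast hDnz)
  have hNnz0 : q.num ≠ 0 := Rat.num_ne_zero.mpr hqnz
  set M := r.natAbs + s * n with hM
  set N : ℕ := q.num.natAbs with hN
  have hNnz : N ≠ 0 := Int.natAbs_ne_zero.mpr hNnz0
  have hNT : N ∣ T := by
    rw [hN, ← hTP]
    exact Int.natAbs_dvd_natAbs.mpr hnum
  -- cross multiplication identity
  have hcross : N * (s ^ n * n.factorial) = T * q.den := by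
    have hden0 : (q.den : ℚ) ≠ 0 := by exact_mod_cast q.den_ne_zero
    have h1 : (q.num : ℚ) * (D : ℚ) = (P : ℚ) * (q.den : ℚ) := by
      have h2 : (q.num : ℚ) / q.den = (P : ℚ) / D := by rw [Rat.num_div_den, hqPD]
      rw [div_eq_div_iff hden0 (by exact_mod_cast hDnz)] at h2
      exact h2
    have h3 : q.num * D = P * (q.den : ℤ) := by exact_mod_cast h1
    have h4 := congrArg Int.natAbs h3
    simp only [Int.natAbs_mul, Int.natAbs_pow, Int.natAbs_natCast, hD] at h4
    rw [hTP] at h4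
    exact h4
  -- target product in ℕ
  set S := Finset.filter (fun p => Nat.Prime p ∧ ¬ p ∣ s) (Finset.range (M + 1)) with hS
  have hTgt : (∏ p ∈ S, (p : ℤ) ^ Nat.log p M) = ((∏ p ∈ S, p ^ Nat.log p M : ℕ) : ℤ) := by
    push_cast
    rfl
  rw [hTgt]
  set X := ∏ p ∈ S, p ^ Nat.log p M with hX
  have hXnz : X ≠ 0 := by
    rw [hX]
    apply Finset.prod_ne_zero_iff.mpr
    intro p hp
    simp only [hS, Finset.mem_filter] at hp
    exact pow_ne_zero _ hp.2.1.pos.ne'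
  rw [← Int.natAbs_dvd_natAbs, Int.natAbs_natCast, ← hN]
  rw [← Nat.factorization_le_iff_dvd hNnz hXnz, Finsupp.le_def]
  intro p
  by_cases hp : p.Prime
  · by_cases hps : p ∣ s
    · -- p divides s: show p does not divide N
      have hpT : ¬ p ∣ T := by
        rw [hT]
        intro hdvd
        obtain ⟨i, hi, hpi⟩ := (hp.prime.dvd_finset_prod_iff _).mp hdvd
        have h1 : (p : ℤ) ∣ r + s * (i : ℕ) := by
          rw [Int.natCast_dvd]
          exact hpi
        have h2 : (p : ℤ) ∣ (s : ℤ) * (i : ℕ) := by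
          exact Dvd.dvd.mul_right (by exact_mod_cast hps) _
        have h3 : (p : ℤ) ∣ r := by
          have := dvd_sub h1 h2
          simpa using this
        have h4 : p ∣ Int.gcd r s := Nat.dvd_gcd (Int.natCast_dvd.mp h3) hps
        rw [hcop] at h4
        exact hp.one_lt.ne' (Nat.eq_one_of_dvd_one h4)  -- p ∣ 1
      have : N.factorization p = 0 :=
        Nat.factorization_eq_zero_of_not_dvd (fun hd => hpT (hd.trans hNT))
      rw [this]
      exact Nat.zero_le _
    · -- p does not divide s
      have hub := upper_bound r s n hs hr p hp hps hnz
      rw [← hT, ← hM] at hub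
      -- valuation equation from hcross
      have e := congrArg (fun t : ℕ => t.factorization p) hcross
      beta_reduce at e
      rw [Nat.factorization_mul hNnz (by positivity),
          Nat.factorization_mul (pow_ne_zero n (by omega)) (Nat.factorial_ne_zero n),
          Nat.factorization_mul hTnz q.den_ne_zero] at e
      simp only [Finsupp.add_apply] at e
      have hvs : (s ^ n).factorization p = 0 := by
        rw [Nat.factorization_pow, Finsupp.smul_apply,
          Nat.factorization_eq_zero_of_not_dvd hps, smul_zero]
      have hvd : q.den.factorization p = 0 := by
        apply Nat.factorization_eq_zero_of_not_dvd
        intro hpd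
        exact hps (hp.dvd_of_dvd_pow (hpd.trans hden))
      rw [hvs, hvd] at e
      by_cases hpM : p ≤ M
      · have hmem : p ∈ S := by
          simp only [hS, Finset.mem_filter, Finset.mem_range]
          exact ⟨by omega, hp, hps⟩
        have hdX : p ^ Nat.log p M ∣ X :=
          Finset.dvd_prod_of_mem (fun p => p ^ Nat.log p M) hmem
        have hlogle : Nat.log p M ≤ X.factorization p :=
          (hp.pow_dvd_iff_le_factorization hXnz).mp hdX
        omega
      · have hlog0 : Nat.log p M = 0 := Nat.log_eq_zero_iff.mpr (Or.inl (by omega))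
        omega
  · simp [Nat.factorization_eq_zero_of_not_prime _ hp]
end

section
/- For every real x > 1, the number of primes π(x) satisfies π(x) ≤ 8 log 2 · x / log x. -/
open Finset

theorem stmt_7 (x : ℝ) (hx : 1 < x) :
    ((Finset.filter Nat.Prime (Finset.range (⌊x⌋₊ + 1))).card : ℝ) ≤
      8 * Real.log 2 * x / Real.log x := by
  have hx0 : (0:ℝ) < x := lt_trans one_pos hx
  have hlx : 0 < Real.log x := Real.log_pos hx
  set n := ⌊x⌋₊ with hn
  set S := Finset.filter Nat.Prime (Finset.range (n + 1)) with hS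
  set y := Real.sqrt x with hy
  have hy1 : 1 < y := by
    rw [hy, show (1:ℝ) = Real.sqrt 1 by simp]
    exact Real.sqrt_lt_sqrt zero_le_one hx
  have hy0 : 0 < y := lt_trans one_pos hy1
  have hylog : Real.log y = Real.log x / 2 := Real.log_sqrt hx0.le
  have hyy : y * y = x := Real.mul_self_sqrt hx0.le
  set A := S.filter (fun p => ⌊y⌋₊ < p) with hA
  set B := S.filter (fun p => ¬ ⌊y⌋₊ < p) with hB
  have hsplit : A.card + B.card = S.card :=
    Finset.card_filter_add_card_filter_not _
  have hlog2 : (0.6931471803 : ℝ) < Real.log 2 := Real.log_two_gt_d9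
  -- bound on A
  have hApow : y ^ A.card ≤ ∏ p ∈ A, (p:ℝ) := by
    have h := Finset.prod_le_prod (s := A) (f := fun _ : ℕ => y) (g := fun p : ℕ => (p:ℝ))
      (fun _ _ => hy0.le)
      (fun p hp => ((Nat.floor_lt hy0.le).mp (Finset.mem_filter.mp hp).2).le)
    rwa [Finset.prod_const] at h
  have hAprod : (∏ p ∈ A, p) ≤ ∏ p ∈ S, p := by
    apply Finset.prod_le_prod_of_subset_of_one_le' (Finset.filter_subset _ _)
    intro p hp _
    exact (Finset.mem_filter.mp hp).2.one_lt.le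
  have hprim : (∏ p ∈ S, p) ≤ 4 ^ n := primorial_le_4_pow n
  have hAreal : y ^ A.card ≤ (4:ℝ) ^ n := by
    calc y ^ A.card ≤ ∏ p ∈ A, (p:ℝ) := hApow
      _ = ((∏ p ∈ A, p : ℕ) : ℝ) := by push_cast; ring
      _ ≤ ((4 ^ n : ℕ) : ℝ) := by exact_mod_cast le_trans hAprod hprim
      _ = (4:ℝ) ^ n := by push_cast; ring
  have hAlog : (A.card : ℝ) * Real.log y ≤ (n : ℝ) * Real.log 4 := by
    have := Real.log_le_log (by positivity) hAreal
    rwa [Real.log_pow, Real.log_pow] at this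
  have hlog4 : Real.log 4 = 2 * Real.log 2 := by
    rw [show (4:ℝ) = 2 ^ 2 by norm_num, Real.log_pow]; push_cast; ring
  have hnx : (n : ℝ) ≤ x := Nat.floor_le hx0.le
  have hAcard : (A.card : ℝ) * Real.log x ≤ 4 * Real.log 2 * x := by
    rw [hylog, hlog4] at hAlog
    nlinarith [hAlog, hnx, hlog2]
  -- bound on B
  have hBsub : B ⊆ Finset.Ico 2 (⌊y⌋₊ + 1) := by
    intro p hp
    rw [Finset.mem_filter] at hp
    obtain ⟨hpS, hple⟩ := hp
    rw [hS, Finset.mem_filter] at hpS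
    rw [Finset.mem_Ico]
    exact ⟨hpS.2.two_le, by omega⟩
  have hBcard : (B.card : ℝ) ≤ y := by
    have h1 : B.card ≤ ⌊y⌋₊ + 1 - 2 := by
      calc B.card ≤ (Finset.Ico 2 (⌊y⌋₊ + 1)).card := Finset.card_le_card hBsub
        _ = ⌊y⌋₊ + 1 - 2 := Nat.card_Ico _ _
    have h2 : B.card ≤ ⌊y⌋₊ := by omega
    calc (B.card : ℝ) ≤ (⌊y⌋₊ : ℝ) := by exact_mod_cast h2
      _ ≤ y := Nat.floor_le hy0.le
  have hyb : y * Real.log x ≤ 4 * Real.log 2 * x := by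
    have hly : Real.log y ≤ y - 1 := Real.log_le_sub_one_of_pos hy0
    have : Real.log x = 2 * Real.log y := by rw [hylog]; ring
    nlinarith [hlog2, hyy, hy1]
  -- combine
  rw [le_div_iff₀ hlx]
  have hcard : (S.card : ℝ) = (A.card : ℝ) + (B.card : ℝ) := by
    exact_mod_cast hsplit.symm
  rw [hcard]
  have hB4 : (B.card : ℝ) * Real.log x ≤ 4 * Real.log 2 * x :=
    le_trans (mul_le_mul_of_nonneg_right hBcard hlx.le) hyb
  nlinarith [hAcard, hB4]
end

section
/- For every real x ≥ 2, the sum Σ_{p ≤ x} (log p)/p over primes p at most x is bounded above by log x + 6. -/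
open Finset

/-- For a prime `p ≤ n`, `p ^ (n / p)` divides `n!`. -/
lemma aux_pow_dvd_factorial {p n : ℕ} (hp : p.Prime) (hpn : p ≤ n) :
    p ^ (n / p) ∣ Nat.factorial n := by
  rw [Nat.Prime.pow_dvd_factorial_iff hp (Nat.lt_succ_self _)]
  have h1 : (1 : ℕ) ∈ Finset.Ico 1 (Nat.log p n + 1) := by
    simp [Nat.log_pos hp.one_lt hpn]
  calc n / p = n / p ^ 1 := by norm_num
    _ ≤ ∑ i ∈ Finset.Ico 1 (Nat.log p n + 1), n / p ^ i :=
      Finset.single_le_sum (f := fun i => n / p ^ i) (fun i _ => Nat.zero_le _) h1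

lemma aux_prod_dvd_factorial (n : ℕ) :
    (∏ p ∈ Finset.filter Nat.Prime (Finset.range (n + 1)), p ^ (n / p)) ∣ Nat.factorial n := by
  have hZ : ((∏ p ∈ Finset.filter Nat.Prime (Finset.range (n + 1)), p ^ (n / p) : ℕ) : ℤ)
      ∣ ((Nat.factorial n : ℕ) : ℤ) := by
    push_cast
    apply Finset.prod_dvd_of_coprime
    · intro p hp q hq hpq
      simp only [Finset.coe_filter, Set.mem_setOf_eq, Finset.mem_range] at hp hq
      simp only [Function.onFun]
      exact (Nat.isCoprime_iff_coprime.2 ((Nat.coprime_primes hp.2 hq.2).2 hpq)).pow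
    · intro p hp
      simp only [Finset.mem_filter, Finset.mem_range] at hp
      exact_mod_cast Int.natCast_dvd_natCast.2
        (aux_pow_dvd_factorial hp.2 (Nat.lt_succ_iff.mp hp.1))
  exact_mod_cast hZ

theorem stmt_8 (x : ℝ) (hx : 2 ≤ x) :
    ∑ p ∈ Finset.filter Nat.Prime (Finset.range (⌊x⌋₊ + 1)), Real.log p / p ≤
      Real.log x + 6 := by
  set n := ⌊x⌋₊ with hn
  have hx0 : (0 : ℝ) < x := by linarith
  have hn2 : 2 ≤ n := Nat.le_floor (by exact_mod_cast hx)
  have hnx : (n : ℝ) ≤ x := Nat.floor_le (le_of_lt hx0)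
  have hxn1 : x < n + 1 := Nat.lt_floor_add_one x
  set P := Finset.filter Nat.Prime (Finset.range (n + 1)) with hP
  have hplt : ∀ p ∈ P, p.Prime ∧ (2:ℝ) ≤ p ∧ (p:ℝ) ≤ n := by
    intro p hp
    simp only [hP, Finset.mem_filter, Finset.mem_range] at hp
    refine ⟨hp.2, ?_, ?_⟩
    · exact_mod_cast hp.2.two_le
    · exact_mod_cast Nat.lt_succ_iff.mp hp.1
  -- Step 1: ∑ (n/p) log p ≤ log (n!) ≤ n log n ≤ x log x
  have hlogx : 0 < Real.log x := Real.log_pos (by linarith)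
  have step1 : ∑ p ∈ P, ((n / p : ℕ) : ℝ) * Real.log p ≤ x * Real.log x := by
    have hdvd := aux_prod_dvd_factorial n
    have hfacpos : 0 < Nat.factorial n := Nat.factorial_pos n
    have hle : (∏ p ∈ P, p ^ (n / p)) ≤ Nat.factorial n := Nat.le_of_dvd hfacpos hdvd
    have hlog1 : ∑ p ∈ P, ((n / p : ℕ) : ℝ) * Real.log p
        = Real.log ((∏ p ∈ P, p ^ (n / p) : ℕ) : ℝ) := by
      push_cast
      rw [Real.log_prod]
      · refine Finset.sum_congr rfl fun p hp => ?_
        rw [Real.log_pow]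
      · intro p hp
        have := (hplt p hp).2.1
        positivity
    have hlog2 : Real.log ((∏ p ∈ P, p ^ (n / p) : ℕ) : ℝ) ≤ Real.log (Nat.factorial n : ℝ) := by
      apply Real.log_le_log
        (by exact_mod_cast Finset.prod_pos fun p hp => pow_pos (hplt p hp).1.pos _)
        (by exact_mod_cast hle)
    have hlog3 : Real.log (Nat.factorial n : ℝ) ≤ (n : ℝ) * Real.log n := by
      calc Real.log (Nat.factorial n : ℝ) ≤ Real.log ((n : ℝ) ^ n) := by
            apply Real.log_le_log (by exact_mod_cast hfacpos)
            exact_mod_cast Nat.factorial_le_pow n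
        _ = (n : ℝ) * Real.log n := Real.log_pow n n
    have hlog4 : (n : ℝ) * Real.log n ≤ x * Real.log x := by
      have h1 : Real.log n ≤ Real.log x := Real.log_le_log (by positivity) hnx
      have h2 : (0:ℝ) ≤ Real.log n := Real.log_nonneg (by exact_mod_cast hn2.trans (le_refl n) |>.trans' (by norm_num))
      exact mul_le_mul hnx h1 h2 (le_of_lt hx0)
    linarith [hlog1, hlog2, hlog3, hlog4]
  -- Step 2: ∑ log p ≤ 3 x  (via primorial ≤ 4^n and log 4 ≤ 3)
  have step2 : ∑ p ∈ P, Real.log p ≤ 3 * x := by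
    have hprim : (primorial n : ℝ) ≤ (4 : ℝ) ^ n := by
      exact_mod_cast primorial_le_4_pow n
    have h1 : ∑ p ∈ P, Real.log p = Real.log ((primorial n : ℕ) : ℝ) := by
      rw [primorial]
      push_cast
      rw [Real.log_prod]
      intro p hp
      have := (hplt p hp).2.1
      positivity
    have h2 : Real.log ((primorial n : ℕ) : ℝ) ≤ Real.log ((4:ℝ) ^ n) := by
      apply Real.log_le_log (by exact_mod_cast primorial_pos n) hprim
    have h3 : Real.log ((4:ℝ) ^ n) = (n : ℝ) * Real.log 4 := by rw [Real.log_pow]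
    have h4 : Real.log 4 ≤ 3 := by
      have := Real.log_le_sub_one_of_pos (by norm_num : (0:ℝ) < 4)
      linarith
    have h5 : (n : ℝ) * Real.log 4 ≤ (n : ℝ) * 3 := by
      apply mul_le_mul_of_nonneg_left h4 (by positivity)
    nlinarith [hnx]
  -- Step 3: pointwise, (x/p - 1) * log p ≤ (n/p : ℕ) * log p
  have step3 : ∀ p ∈ P, (x / p - 1) * Real.log p ≤ ((n / p : ℕ) : ℝ) * Real.log p := by
    intro p hp
    obtain ⟨hpp, hp2, hpn⟩ := hplt p hp
    have hppos : (0:ℝ) < p := by linarith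
    have hlogp : 0 ≤ Real.log p := Real.log_nonneg (by linarith)
    apply mul_le_mul_of_nonneg_right _ hlogp
    have hdiv : (n : ℝ) + 1 ≤ ((n / p : ℕ) + 1 : ℝ) * p := by
      have h0 : n < (n / p + 1) * p := (Nat.div_lt_iff_lt_mul hpp.pos).mp (Nat.lt_succ_self _)
      exact_mod_cast Nat.succ_le_of_lt h0
    rw [div_sub_one (by positivity), div_le_iff₀ hppos]
    nlinarith [hxn1, hdiv]
  -- Combine
  have key : ∑ p ∈ P, (x / p - 1) * Real.log p ≤ x * Real.log x := by
    calc ∑ p ∈ P, (x / p - 1) * Real.log p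
        ≤ ∑ p ∈ P, ((n / p : ℕ) : ℝ) * Real.log p := Finset.sum_le_sum step3
      _ ≤ x * Real.log x := step1
  have expand : ∑ p ∈ P, (x / p - 1) * Real.log p
      = x * (∑ p ∈ P, Real.log p / p) - ∑ p ∈ P, Real.log p := by
    rw [Finset.mul_sum, ← Finset.sum_sub_distrib]
    refine Finset.sum_congr rfl fun p hp => ?_
    have hppos : (0:ℝ) < p := by linarith [(hplt p hp).2.1]
    field_simp
  have final : x * (∑ p ∈ P, Real.log p / p) ≤ x * (Real.log x + 3) := by
    rw [mul_add]
    nlinarith [key, step2, expand]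
  have := le_of_mul_le_mul_left (by linarith [final] : x * (∑ p ∈ P, Real.log p / p) ≤ x * (Real.log x + 6)) hx0
  exact this
end

section
/- For every positive integer X, log(X!) ≥ X · Σ_{p ≤ X} (log p)/p − π(X) · log X, where the sum and π(X) range over primes p ≤ X. -/
theorem stmt_9 (X : ℕ) (hX : 0 < X) :
    Real.log (X.factorial) ≥
      X * ∑ p ∈ Finset.filter Nat.Prime (Finset.range (X + 1)), Real.log p / p -
        ((Finset.filter Nat.Prime (Finset.range (X + 1))).card : ℝ) * Real.log X := by
  set S := Finset.filter Nat.Prime (Finset.range (X + 1)) with hS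
  have hfne : X.factorial ≠ 0 := X.factorial_ne_zero
  have hSmem : ∀ p ∈ S, p.Prime ∧ p ≤ X := by
    intro p hp
    obtain ⟨hlt, hpp⟩ := Finset.mem_filter.mp hp
    exact ⟨hpp, Nat.lt_succ_iff.mp (Finset.mem_range.mp hlt)⟩
  -- prime factors of X! are exactly S
  have hsupp : (X.factorial).primeFactors = S := by
    ext p
    simp only [Nat.mem_primeFactors, hS, Finset.mem_filter, Finset.mem_range]
    constructor
    · rintro ⟨hp, hdvd, -⟩
      exact ⟨Nat.lt_succ_of_le ((Nat.Prime.dvd_factorial hp).mp hdvd), hp⟩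
    · rintro ⟨hlt, hp⟩
      exact ⟨hp, (Nat.Prime.dvd_factorial hp).mpr (Nat.lt_succ_iff.mp hlt), hfne⟩
  -- log X! = Σ_{p∈S} fact p * log p
  have hlog : Real.log (X.factorial) =
      ∑ p ∈ S, ((X.factorial).factorization p : ℝ) * Real.log p := by
    conv_lhs => rw [← Nat.factorization_prod_pow_eq_self hfne]
    rw [Nat.prod_factorization_eq_prod_primeFactors, hsupp]
    push_cast
    rw [Real.log_prod (fun p hp => by
      have hp2 := (hSmem p hp).1.pos
      positivity)]
    exact Finset.sum_congr rfl fun p hp => Real.log_pow _ _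
  -- X/p ≤ factorization p
  have hkey : ∀ p ∈ S, (X / p : ℕ) ≤ (X.factorial).factorization p := by
    intro p hp
    obtain ⟨hpp, hpX⟩ := hSmem p hp
    rw [← Nat.Prime.pow_dvd_iff_le_factorization hpp hfne,
      Nat.Prime.pow_dvd_factorial_iff hpp (Nat.lt_succ_self _)]
    have h1 : (1 : ℕ) ∈ Finset.Ico 1 (Nat.log p X + 1) := by
      simp [Nat.succ_le_iff, Nat.log_pos hpp.one_lt hpX]
    calc X / p = X / p ^ 1 := by rw [pow_one]
      _ ≤ _ := Finset.single_le_sum (f := fun i => X / p ^ i)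
          (fun i _ => Nat.zero_le _) h1
  rw [hlog, ge_iff_le, Finset.mul_sum]
  have hcard : (S.card : ℝ) * Real.log X = ∑ _p ∈ S, Real.log X := by
    rw [Finset.sum_const, nsmul_eq_mul]
  rw [hcard, ← Finset.sum_sub_distrib]
  refine Finset.sum_le_sum fun p hp => ?_
  obtain ⟨hpp, hpX⟩ := hSmem p hp
  have hp0 : (0:ℝ) < p := by exact_mod_cast hpp.pos
  have hlogp : (0:ℝ) ≤ Real.log p := Real.log_nonneg (by exact_mod_cast hpp.one_le)
  have hlogpX : Real.log p ≤ Real.log X := by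
    apply Real.log_le_log hp0; exact_mod_cast hpX
  have hdiv : (X:ℝ)/p - 1 ≤ ((X/p : ℕ) : ℝ) := by
    have hnat : X < p * (X/p) + p := by
      conv_lhs => rw [← Nat.div_add_mod X p]
      exact Nat.add_lt_add_left (Nat.mod_lt _ hpp.pos) _
    have : (X:ℝ) < p * ((X/p : ℕ) : ℝ) + p := by exact_mod_cast hnat
    rw [sub_le_iff_le_add, div_le_iff₀ hp0]
    nlinarith
  calc (X:ℝ) * (Real.log p / p) - Real.log X
      ≤ (X:ℝ) * (Real.log p / p) - Real.log p := by linarith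
    _ = ((X:ℝ)/p - 1) * Real.log p := by ring
    _ ≤ ((X/p : ℕ) : ℝ) * Real.log p := by
        exact mul_le_mul_of_nonneg_right hdiv hlogp
    _ ≤ ((X.factorial).factorization p : ℝ) * Real.log p := by
        exact mul_le_mul_of_nonneg_right (by exact_mod_cast hkey p hp) hlogp
end

section
/- Let m ≥ 1, let α_1, ..., α_m be rational numbers, none of which is 0 or a negative integer, with α_i − α_j ∉ ℤ for i ≠ j, and let n ≥ 1, N = mn. Then there exist polynomials Q(z) ≠ 0 of degree exactly N and P_1(z), ..., P_m(z) with deg P_j ≤ N, all with rational coefficients, such that for each j = 1, ..., m the formal power series Q(z)·Σ_{k≥0}(α_j)_k z^k − P_j(z) has order at z = 0 at least N + n + 1. -/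
lemma poch_basis : ∀ (d : ℕ) (F : Polynomial ℚ), F.natDegree ≤ d →
    ∃ c : ℕ → ℚ, F = ∑ k ∈ Finset.range (d+1), Polynomial.C (c k) * ascPochhammer ℚ k := by
  intro d
  induction d with
  | zero =>
    intro F hF
    refine ⟨fun _ => F.coeff 0, ?_⟩
    rw [Polynomial.eq_C_of_natDegree_le_zero hF]
    simp
  | succ d ih =>
    intro F hF
    set G := F - Polynomial.C (F.coeff (d+1)) * ascPochhammer ℚ (d+1) with hG
    have hasc : (ascPochhammer ℚ (d+1)).natDegree = d+1 := ascPochhammer_natDegree (S := ℚ) (d+1)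
    have hGd : G.natDegree ≤ d := by
      rw [Polynomial.natDegree_le_iff_coeff_eq_zero]
      intro i hi
      rcases eq_or_lt_of_le (Nat.succ_le_of_lt hi) with h | h
      · simp only [hG, Polynomial.coeff_sub, Polynomial.coeff_C_mul, ← h]
        have h1 : (ascPochhammer ℚ (d+1)).coeff (d+1) = 1 := by
          have := (monic_ascPochhammer ℚ (d+1)).coeff_natDegree
          rwa [hasc] at this
        rw [h1]; ring
      · simp only [hG, Polynomial.coeff_sub, Polynomial.coeff_C_mul]
        rw [Polynomial.coeff_eq_zero_of_natDegree_lt (p := F) (lt_of_le_of_lt hF h),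
          Polynomial.coeff_eq_zero_of_natDegree_lt (p := ascPochhammer ℚ (d+1))
            (by rw [hasc]; exact h)]
        ring
    obtain ⟨c, hc⟩ := ih G hGd
    refine ⟨fun k => if k = d+1 then F.coeff (d+1) else c k, ?_⟩
    rw [Finset.sum_range_succ]
    have h2 : ∑ k ∈ Finset.range (d+1),
        Polynomial.C (if k = d+1 then F.coeff (d+1) else c k) * ascPochhammer ℚ k
        = ∑ k ∈ Finset.range (d+1), Polynomial.C (c k) * ascPochhammer ℚ k := by
      apply Finset.sum_congr rfl
      intro k hk
      rw [if_neg (by have := Finset.mem_range.mp hk; omega)]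
    rw [h2, ← hc, hG]
    simp only [if_pos rfl, ite_true]
    ring

theorem stmt_17 (m n : ℕ) (hm : 1 ≤ m) (hn : 1 ≤ n) (α : Fin m → ℚ)
    (hα : ∀ j, ∀ k : ℕ, α j ≠ -(k : ℚ))
    (hdiff : ∀ i j, i ≠ j → ∀ z : ℤ, α i - α j ≠ (z : ℚ)) :
    ∃ (Q : Polynomial ℚ) (P : Fin m → Polynomial ℚ),
      Q ≠ 0 ∧ Q.natDegree = m * n ∧ (∀ j, (P j).natDegree ≤ m * n) ∧
      ∀ j, ((m * n + n + 1 : ℕ) : ℕ∞) ≤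
        ((Q : PowerSeries ℚ) *
            PowerSeries.mk (fun k => (ascPochhammer ℚ k).eval (α j)) -
          (P j : PowerSeries ℚ)).order := by
  classical
  set N := m * n with hN
  set F : Polynomial ℚ := ∏ j : Fin m, ∏ s ∈ Finset.range n,
    (Polynomial.X - Polynomial.C (α j + (s : ℚ) + 1)) with hF
  have hFdeg : F.natDegree = N := by
    rw [hF, Polynomial.natDegree_prod _ _ (fun j _ =>
      Finset.prod_ne_zero_iff.mpr (fun s _ => Polynomial.X_sub_C_ne_zero _))]
    have h1 : ∀ j : Fin m, (∏ s ∈ Finset.range n,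
        (Polynomial.X - Polynomial.C (α j + (s : ℚ) + 1))).natDegree = n := by
      intro j
      rw [Polynomial.natDegree_prod _ _ (fun s _ => Polynomial.X_sub_C_ne_zero _)]
      simp only [Polynomial.natDegree_X_sub_C, Finset.sum_const, Finset.card_range,
        smul_eq_mul, mul_one]
    simp only [h1, Finset.sum_const, Finset.card_univ, Fintype.card_fin, smul_eq_mul, hN]
  obtain ⟨c, hc⟩ := poch_basis N F (le_of_eq hFdeg)
  have hF0 : F.eval 0 ≠ 0 := by
    rw [hF]
    simp only [Polynomial.eval_prod, Polynomial.eval_sub, Polynomial.eval_X, Polynomial.eval_C]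
    apply Finset.prod_ne_zero_iff.mpr
    intro j _
    apply Finset.prod_ne_zero_iff.mpr
    intro s _
    intro h
    apply hα j (s+1)
    push_cast
    linarith
  have hFeval0 : F.eval 0 = c 0 := by
    rw [hc, Polynomial.eval_finset_sum]
    rw [Finset.sum_eq_single 0]
    · simp
    · intro k hk hk0
      simp [ascPochhammer_eval_zero, hk0]
    · intro h; exact absurd (Finset.mem_range.mpr (Nat.succ_pos N)) h
  have hc0 : c 0 ≠ 0 := hFeval0 ▸ hF0
  set Q : Polynomial ℚ := ∑ i ∈ Finset.range (N+1), Polynomial.monomial i (c (N - i)) with hQ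
  have hQcoeff : ∀ i, Q.coeff i = if i ≤ N then c (N - i) else 0 := by
    intro i
    rw [hQ, Polynomial.finset_sum_coeff]
    simp only [Polynomial.coeff_monomial]
    rw [Finset.sum_ite_eq' (Finset.range (N+1)) i]
    simp [Nat.lt_succ_iff]
  have hQN : Q.coeff N = c 0 := by rw [hQcoeff]; simp
  have hQne : Q ≠ 0 := fun h => hc0 (by rw [← hQN, h, Polynomial.coeff_zero])
  have hQdegle : Q.natDegree ≤ N := by
    rw [Polynomial.natDegree_le_iff_coeff_eq_zero]
    intro i hi
    rw [hQcoeff, if_neg (by omega)]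
  have hQdeg : Q.natDegree = N :=
    Polynomial.natDegree_eq_of_le_of_coeff_ne_zero hQdegle (hQN ▸ hc0)
  -- key vanishing
  have key : ∀ (j : Fin m) (t : ℕ), N < t → t ≤ N + n →
      (PowerSeries.coeff t) ((Q : PowerSeries ℚ) *
        PowerSeries.mk (fun k => (ascPochhammer ℚ k).eval (α j))) = 0 := by
    intro j t ht1 ht2
    rw [PowerSeries.coeff_mul, Finset.Nat.sum_antidiagonal_eq_sum_range_succ_mk]
    simp only [Polynomial.coeff_coe, PowerSeries.coeff_mk]
    rw [← Finset.sum_subset (Finset.range_subset_range.mpr (by omega) :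
        Finset.range (N+1) ⊆ Finset.range (t+1))
      (fun x _ hx => by
        rw [hQcoeff, if_neg (by simpa [Nat.lt_succ_iff, not_le] using
          (Finset.mem_range.not.mp hx)), zero_mul])]
    have step : ∑ i ∈ Finset.range (N+1), Q.coeff i * (ascPochhammer ℚ (t - i)).eval (α j)
        = ∑ k ∈ Finset.range (N+1), c k * (ascPochhammer ℚ ((t - N) + k)).eval (α j) := by
      rw [← Finset.sum_range_reflect
        (fun k => c k * (ascPochhammer ℚ ((t - N) + k)).eval (α j)) (N+1)]
      apply Finset.sum_congr rfl
      intro i hi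
      have hi' : i ≤ N := Nat.lt_succ_iff.mp (Finset.mem_range.mp hi)
      rw [hQcoeff, if_pos hi']
      have e1 : N + 1 - 1 - i = N - i := by omega
      have e2 : t - N + (N - i) = t - i := by omega
      rw [e1, e2]
    rw [step]
    have mult : ∀ k : ℕ, (ascPochhammer ℚ ((t - N) + k)).eval (α j)
        = (ascPochhammer ℚ (t - N)).eval (α j) *
          (ascPochhammer ℚ k).eval (α j + ((t - N : ℕ) : ℚ)) := by
      intro k
      have h := congrArg (Polynomial.eval (α j)) (ascPochhammer_mul (S := ℚ) (t - N) k)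
      simp only [Polynomial.eval_mul, Polynomial.eval_comp, Polynomial.eval_add,
        Polynomial.eval_X, Polynomial.eval_natCast] at h
      exact h.symm
    have tosum : ∑ k ∈ Finset.range (N+1), c k * (ascPochhammer ℚ ((t - N) + k)).eval (α j)
        = (ascPochhammer ℚ (t - N)).eval (α j) * F.eval (α j + ((t - N : ℕ) : ℚ)) := by
      rw [hc, Polynomial.eval_finset_sum, Finset.mul_sum]
      apply Finset.sum_congr rfl
      intro k _
      rw [mult k]
      simp only [Polynomial.eval_mul, Polynomial.eval_C]
      ring
    rw [tosum]
    have hroot : F.eval (α j + ((t - N : ℕ) : ℚ)) = 0 := by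
      obtain ⟨s', hs'⟩ : ∃ s', t - N = s' + 1 := ⟨t - N - 1, by omega⟩
      have hs'n : s' < n := by omega
      rw [hF, Polynomial.eval_prod]
      apply Finset.prod_eq_zero (Finset.mem_univ j)
      rw [Polynomial.eval_prod]
      apply Finset.prod_eq_zero (Finset.mem_range.mpr hs'n)
      simp only [Polynomial.eval_sub, Polynomial.eval_X, Polynomial.eval_C]
      rw [hs']
      push_cast
      ring
    rw [hroot, mul_zero]
  -- define P
  set P : Fin m → Polynomial ℚ := fun j => ∑ t ∈ Finset.range (N+1),
    Polynomial.monomial t ((PowerSeries.coeff t) ((Q : PowerSeries ℚ) *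
      PowerSeries.mk (fun k => (ascPochhammer ℚ k).eval (α j)))) with hP
  have hPcoeff : ∀ j t, (P j).coeff t = if t ≤ N then
      (PowerSeries.coeff t) ((Q : PowerSeries ℚ) *
        PowerSeries.mk (fun k => (ascPochhammer ℚ k).eval (α j))) else 0 := by
    intro j t
    rw [hP]
    simp only
    rw [Polynomial.finset_sum_coeff]
    simp only [Polynomial.coeff_monomial]
    rw [Finset.sum_ite_eq' (Finset.range (N+1)) t]
    simp [Nat.lt_succ_iff]
  have hPdeg : ∀ j, (P j).natDegree ≤ N := by
    intro j
    rw [hP]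
    apply Polynomial.natDegree_sum_le_of_forall_le
    intro t ht
    exact le_trans (Polynomial.natDegree_monomial_le _) (Nat.lt_succ_iff.mp (Finset.mem_range.mp ht))
  refine ⟨Q, P, hQne, hQdeg, hPdeg, ?_⟩
  intro j
  apply PowerSeries.nat_le_order
  intro i hi
  rw [map_sub, Polynomial.coeff_coe, hPcoeff]
  by_cases h : i ≤ N
  · rw [if_pos h, sub_self]
  · rw [if_neg h, sub_zero, key j i (by omega) (by omega)]
end

section
/- Fix an index i with 0-based setup as follows: with γ_0 = n − n_i + 1 + α_i and γ_1, ..., γ_N pairwise distinct and all distinct from γ_0, the system b_0 + b_1 γ_0 + ... + b_N γ_0(γ_0+1)···(γ_0+N−1) = 1, b_0 + b_1 γ_σ + ... + b_N γ_σ(γ_σ+1)···(γ_σ+N−1) = 0 (σ = 1,...,N) has a unique solution, and it is given by k! b_k = Σ_{τ=0}^{k} (−1)^τ C(k,τ) ∏_{s=1}^{N} (γ_s + τ)/(γ_s − γ_0) for k = 0, 1, ..., N. -/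
open Finset Polynomial

lemma alt_sum_int (m τ : ℕ) :
    ∑ k ∈ Finset.range (m + 1), (-1 : ℤ) ^ k * (m.choose k) * (k.choose τ) =
      if τ = m then (-1) ^ m else 0 := by
  rcases le_or_gt τ m with h | h
  · have h1 : ∑ k ∈ Finset.range (m + 1), (-1 : ℤ) ^ k * (m.choose k) * (k.choose τ) =
        ∑ k ∈ Finset.Ico τ (m + 1), (-1 : ℤ) ^ k * (m.choose k) * (k.choose τ) := by
      refine (Finset.sum_subset ?_ ?_).symm
      · intro k hk; simp only [Finset.mem_Ico] at hk; simp [Finset.mem_range]; omega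
      · intro k hk hk'
        simp only [Finset.mem_range, Finset.mem_Ico, not_and, not_lt] at hk hk'
        have : k < τ := by omega
        simp [Nat.choose_eq_zero_of_lt this]
    rw [h1, Finset.sum_Ico_eq_sum_range]
    have h2 : ∀ i ∈ Finset.range (m + 1 - τ),
        (-1 : ℤ) ^ (τ + i) * (m.choose (τ + i)) * ((τ + i).choose τ) =
        ((-1) ^ τ * m.choose τ) * ((-1) ^ i * (m - τ).choose i) := by
      intro i hi
      simp only [Finset.mem_range] at hi
      have hc : m.choose (τ + i) * (τ + i).choose τ = m.choose τ * (m - τ).choose i := by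
        have := Nat.choose_mul (n := m) (k := τ + i) (s := τ)
        simpa using this
      have hc' : ((m.choose (τ + i) : ℤ)) * ((τ + i).choose τ) =
          (m.choose τ : ℤ) * ((m - τ).choose i) := by exact_mod_cast congrArg (Nat.cast : ℕ → ℤ) hc
      rw [pow_add]
      calc (-1 : ℤ) ^ τ * (-1) ^ i * (m.choose (τ + i)) * ((τ + i).choose τ)
          = (-1 : ℤ) ^ τ * (-1) ^ i * ((m.choose (τ + i)) * ((τ + i).choose τ)) := by ring
        _ = (-1 : ℤ) ^ τ * (-1) ^ i * ((m.choose τ : ℤ) * ((m - τ).choose i)) := by rw [hc']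
        _ = ((-1) ^ τ * m.choose τ) * ((-1) ^ i * (m - τ).choose i) := by ring
    rw [Finset.sum_congr rfl h2, ← Finset.mul_sum]
    have h3 : m + 1 - τ = (m - τ) + 1 := by omega
    rw [h3, Int.alternating_sum_range_choose]
    rcases eq_or_lt_of_le h with rfl | hlt
    · simp
    · rw [if_neg (by omega), if_neg (by omega), mul_zero]
  · rw [if_neg (by omega)]
    apply Finset.sum_eq_zero
    intro k hk
    simp only [Finset.mem_range] at hk
    have : k < τ := by omega
    simp [Nat.choose_eq_zero_of_lt this]

lemma alt_sum (K : Type*) [Field K] [CharZero K] (m τ : ℕ) :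
    ∑ k ∈ Finset.range (m + 1), (-1 : K) ^ k * (m.choose k) * (k.choose τ) =
      if τ = m then (-1) ^ m else 0 := by
  have := alt_sum_int m τ
  have h2 : ((∑ k ∈ Finset.range (m + 1), (-1 : ℤ) ^ k * (m.choose k) * (k.choose τ) : ℤ) : K) =
      ∑ k ∈ Finset.range (m + 1), (-1 : K) ^ k * (m.choose k) * (k.choose τ) := by
    push_cast
    exact Finset.sum_congr rfl fun x _ => by ring
  rw [← h2, this]
  split <;> push_cast <;> ring

lemma newton (K : Type*) [Field K] [CharZero K] (N : ℕ) (f : K[X]) (hf : f.natDegree ≤ N) :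
    f = ∑ k ∈ Finset.range (N + 1), Polynomial.C ((↑(Nat.factorial k) : K)⁻¹ *
      ∑ τ ∈ Finset.range (k + 1), (-1) ^ τ * (k.choose τ) * f.eval (-(τ : K))) *
        ascPochhammer K k := by
  set g := f - ∑ k ∈ Finset.range (N + 1), Polynomial.C ((↑(Nat.factorial k) : K)⁻¹ *
      ∑ τ ∈ Finset.range (k + 1), (-1) ^ τ * (k.choose τ) * f.eval (-(τ : K))) *
        ascPochhammer K k with hg
  have hdeg : g.natDegree < N + 1 := by
    apply Nat.lt_succ_of_le
    refine le_trans (Polynomial.natDegree_sub_le _ _) (max_le hf ?_)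
    apply Polynomial.natDegree_sum_le_of_forall_le
    intro k hk
    simp only [Finset.mem_range] at hk
    refine le_trans (Polynomial.natDegree_C_mul_le _ _) ?_
    rw [ascPochhammer_natDegree]
    omega
  have heval : ∀ m : ℕ, m ≤ N → g.eval (-(m : K)) = 0 := by
    intro m hm
    have hterm : ∀ k ∈ Finset.range (N + 1),
        (Polynomial.C ((↑(Nat.factorial k) : K)⁻¹ *
          ∑ τ ∈ Finset.range (k + 1), (-1) ^ τ * (k.choose τ) * f.eval (-(τ : K))) *
          ascPochhammer K k).eval (-(m : K)) =
        ∑ τ ∈ Finset.range (N + 1),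
          (-1) ^ k * (m.choose k : K) * ((-1) ^ τ * (k.choose τ) * f.eval (-(τ : K))) := by
      intro k hk
      simp only [Finset.mem_range] at hk
      have hasc : (ascPochhammer K k).eval (-(m : K)) =
          (-1) ^ k * (Nat.factorial k : K) * (m.choose k : K) := by
        rw [ascPochhammer_eval_neg_eq_descPochhammer, descPochhammer_eval_eq_descFactorial,
          Nat.descFactorial_eq_factorial_mul_choose]
        push_cast; ring
      have hext : ∑ τ ∈ Finset.range (k + 1), (-1 : K) ^ τ * (k.choose τ) * f.eval (-(τ : K)) =
          ∑ τ ∈ Finset.range (N + 1), (-1 : K) ^ τ * (k.choose τ) * f.eval (-(τ : K)) := by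
        refine Finset.sum_subset (Finset.range_subset_range.mpr (by omega)) ?_
        intro τ hτ hτ'
        simp only [Finset.mem_range, not_lt] at hτ hτ'
        simp [Nat.choose_eq_zero_of_lt (by omega : k < τ)]
      rw [Polynomial.eval_mul, Polynomial.eval_C, hasc, hext, Finset.mul_sum, Finset.sum_mul]
      refine Finset.sum_congr rfl fun τ _ => ?_
      have hne : (Nat.factorial k : K) ≠ 0 := by exact_mod_cast Nat.factorial_ne_zero k
      field_simp
    have hsum : (∑ k ∈ Finset.range (N + 1), Polynomial.C ((↑(Nat.factorial k) : K)⁻¹ *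
        ∑ τ ∈ Finset.range (k + 1), (-1) ^ τ * (k.choose τ) * f.eval (-(τ : K))) *
          ascPochhammer K k).eval (-(m : K)) = f.eval (-(m : K)) := by
      rw [Polynomial.eval_finset_sum, Finset.sum_congr rfl hterm, Finset.sum_comm]
      have hinner : ∀ τ ∈ Finset.range (N + 1),
          ∑ k ∈ Finset.range (N + 1),
            (-1 : K) ^ k * (m.choose k : K) * ((-1) ^ τ * (k.choose τ) * f.eval (-(τ : K))) =
          (if τ = m then ((-1) ^ τ * f.eval (-(τ : K))) * (-1 : K) ^ m else 0) := by
        intro τ _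
        have hshrink : ∑ k ∈ Finset.range (N + 1), (-1 : K) ^ k * (m.choose k) * (k.choose τ) =
            ∑ k ∈ Finset.range (m + 1), (-1 : K) ^ k * (m.choose k) * (k.choose τ) := by
          refine (Finset.sum_subset (Finset.range_subset_range.mpr (by omega)) ?_).symm
          intro k hk hk'
          simp only [Finset.mem_range, not_lt] at hk hk'
          simp [Nat.choose_eq_zero_of_lt (by omega : m < k)]
        calc ∑ k ∈ Finset.range (N + 1),
              (-1 : K) ^ k * (m.choose k : K) * ((-1) ^ τ * (k.choose τ) * f.eval (-(τ : K)))
            = ((-1) ^ τ * f.eval (-(τ : K))) *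
              ∑ k ∈ Finset.range (N + 1), (-1 : K) ^ k * (m.choose k) * (k.choose τ) := by
              rw [Finset.mul_sum]; exact Finset.sum_congr rfl fun k _ => by ring
          _ = _ := by rw [hshrink, alt_sum, mul_ite, mul_zero]
      rw [Finset.sum_congr rfl hinner, Finset.sum_ite_eq' (Finset.range (N + 1))]
      rw [if_pos (Finset.mem_range.mpr (by omega))]
      have h4 : (-1 : K) ^ m * (-1) ^ m = 1 := by
        rw [← pow_add]; exact Even.neg_one_pow ⟨m, rfl⟩
      calc (-1 : K) ^ m * f.eval (-(m : K)) * (-1) ^ m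
          = ((-1 : K) ^ m * (-1) ^ m) * f.eval (-(m : K)) := by ring
        _ = f.eval (-(m : K)) := by rw [h4, one_mul]
    rw [hg, Polynomial.eval_sub, hsum, sub_self]
  have hzero : g = 0 := by
    apply Polynomial.eq_zero_of_natDegree_lt_card_of_eval_eq_zero g
      (f := fun m : Fin (N + 1) => -((m : ℕ) : K))
    · intro a b hab
      have : ((a : ℕ) : K) = ((b : ℕ) : K) := by
        have := neg_injective hab; exact this
      exact Fin.ext (Nat.cast_injective this)
    · intro i; exact heval i (by omega)
    · simpa using hdeg
  exact sub_eq_zero.mp hzero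

lemma homog (K : Type*) [Field K] [CharZero K] (N : ℕ) (γ : Fin (N + 1) → K)
    (hγ : Function.Injective γ) (d : Fin (N + 1) → K)
    (hd : ∀ ℓ, ∑ j : Fin (N + 1), d j * (ascPochhammer K (j : ℕ)).eval (γ ℓ) = 0) :
    d = 0 := by
  set g : K[X] := ∑ j : Fin (N + 1), Polynomial.C (d j) * ascPochhammer K (j : ℕ) with hgdef
  have hdeg : g.natDegree < N + 1 := by
    apply Nat.lt_succ_of_le
    apply Polynomial.natDegree_sum_le_of_forall_le
    intro j _
    refine le_trans (Polynomial.natDegree_C_mul_le _ _) ?_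
    rw [ascPochhammer_natDegree]
    omega
  have hzero : g = 0 := by
    apply Polynomial.eq_zero_of_natDegree_lt_card_of_eval_eq_zero g hγ
    · intro ℓ
      rw [hgdef, Polynomial.eval_finset_sum]
      simpa using hd ℓ
    · simpa using hdeg
  have hcoeff : ∀ j : Fin (N + 1),
      ∑ j' : Fin (N + 1), d j' * (ascPochhammer K (j' : ℕ)).coeff (j : ℕ) = 0 := by
    intro j
    have := congrArg (fun p => Polynomial.coeff p (j : ℕ)) hzero
    simp only [hgdef, Polynomial.finset_sum_coeff, Polynomial.coeff_C_mul,
      Polynomial.coeff_zero] at this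
    exact this
  have key : ∀ n : ℕ, ∀ j : Fin (N + 1), (j : ℕ) = N - n → d j = 0 := by
    intro n
    induction n using Nat.strong_induction_on with
    | _ n ih =>
      intro j hj
      have hup : ∀ j' : Fin (N + 1), (j : ℕ) < (j' : ℕ) → d j' = 0 := by
        intro j' hlt
        have h1 : (j' : ℕ) ≤ N := Nat.lt_succ_iff.mp j'.isLt
        exact ih (N - (j' : ℕ)) (by omega) j' (by omega)
      have hc := hcoeff j
      rw [Finset.sum_eq_single j] at hc
      · have h1 : (ascPochhammer K (j : ℕ)).coeff (j : ℕ) = 1 := by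
          have h2 := (monic_ascPochhammer K (j : ℕ)).coeff_natDegree
          rwa [ascPochhammer_natDegree] at h2
        rwa [h1, mul_one] at hc
      · intro j' _ hne
        rcases lt_or_gt_of_ne (fun h : (j' : ℕ) = (j : ℕ) => hne (Fin.ext h)) with h | h
        · have : (ascPochhammer K (j' : ℕ)).coeff (j : ℕ) = 0 := by
            apply Polynomial.coeff_eq_zero_of_natDegree_lt
            rwa [ascPochhammer_natDegree]
          rw [this, mul_zero]
        · rw [hup j' h, zero_mul]
      · intro h; exact absurd (Finset.mem_univ j) h
  funext j
  have h1 : (j : ℕ) ≤ N := Nat.lt_succ_iff.mp j.isLt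
  exact key (N - (j : ℕ)) j (by omega)

theorem stmt_19 (K : Type*) [Field K] [CharZero K] (N : ℕ)
    (γ : Fin (N + 1) → K) (hγ : Function.Injective γ) :
    ∃ b : Fin (N + 1) → K,
      (∀ ℓ, ∑ j : Fin (N + 1), b j * (ascPochhammer K (j : ℕ)).eval (γ ℓ) =
        if ℓ = 0 then 1 else 0) ∧
      (∀ k : Fin (N + 1), ((k : ℕ).factorial : K) * b k =
        ∑ τ ∈ Finset.range ((k : ℕ) + 1), (-1) ^ τ * ((k : ℕ).choose τ) *
          ∏ ℓ ∈ Finset.univ.erase 0, (γ ℓ + (τ : K)) / (γ ℓ - γ 0)) ∧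
      (∀ b' : Fin (N + 1) → K,
        (∀ ℓ, ∑ j : Fin (N + 1), b' j * (ascPochhammer K (j : ℕ)).eval (γ ℓ) =
          if ℓ = 0 then 1 else 0) → b' = b) := by
  classical
  set P : K[X] := ∏ ℓ ∈ Finset.univ.erase (0 : Fin (N + 1)),
    (Polynomial.C (γ 0 - γ ℓ)⁻¹ * (Polynomial.X - Polynomial.C (γ ℓ))) with hPdef
  have hsub : ∀ ℓ : Fin (N + 1), ℓ ≠ 0 → γ 0 - γ ℓ ≠ 0 := by
    intro ℓ hℓ
    exact sub_ne_zero.mpr fun h => hℓ (hγ h).symm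
  have hPeval : ∀ x : K, P.eval x =
      ∏ ℓ ∈ Finset.univ.erase (0 : Fin (N + 1)), (γ 0 - γ ℓ)⁻¹ * (x - γ ℓ) := by
    intro x
    simp [hPdef, Polynomial.eval_prod]
  have hPdeg : P.natDegree ≤ N := by
    refine le_trans (Polynomial.natDegree_prod_le _ _) ?_
    have hcard : (Finset.univ.erase (0 : Fin (N + 1))).card = N := by
      rw [Finset.card_erase_of_mem (Finset.mem_univ _)]
      simp
    calc ∑ ℓ ∈ Finset.univ.erase (0 : Fin (N + 1)),
          (Polynomial.C (γ 0 - γ ℓ)⁻¹ * (Polynomial.X - Polynomial.C (γ ℓ))).natDegree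
        ≤ ∑ _ℓ ∈ Finset.univ.erase (0 : Fin (N + 1)), 1 := by
          refine Finset.sum_le_sum fun ℓ _ => ?_
          refine le_trans (Polynomial.natDegree_C_mul_le _ _) ?_
          rw [Polynomial.natDegree_X_sub_C]
      _ = N := by rw [Finset.sum_const, hcard, smul_eq_mul, mul_one]
  have hPneg : ∀ τ : ℕ, P.eval (-(τ : K)) =
      ∏ ℓ ∈ Finset.univ.erase (0 : Fin (N + 1)), (γ ℓ + (τ : K)) / (γ ℓ - γ 0) := by
    intro τ
    rw [hPeval]
    refine Finset.prod_congr rfl fun ℓ hℓ => ?_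
    have h1 : γ 0 - γ ℓ ≠ 0 := hsub ℓ (Finset.ne_of_mem_erase hℓ)
    have h2 : γ ℓ - γ 0 ≠ 0 := fun h => h1 (by rw [sub_eq_zero] at h ⊢; exact h.symm)
    field_simp
    ring
  have hP0 : P.eval (γ 0) = 1 := by
    rw [hPeval]
    refine Finset.prod_eq_one fun ℓ hℓ => ?_
    exact inv_mul_cancel₀ (hsub ℓ (Finset.ne_of_mem_erase hℓ))
  have hPℓ : ∀ ℓ : Fin (N + 1), ℓ ≠ 0 → P.eval (γ ℓ) = 0 := by
    intro ℓ hℓ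
    rw [hPeval]
    refine Finset.prod_eq_zero (Finset.mem_erase.mpr ⟨hℓ, Finset.mem_univ _⟩) ?_
    rw [sub_self, mul_zero]
  set c : ℕ → K := fun k => ((Nat.factorial k : K))⁻¹ *
    ∑ τ ∈ Finset.range (k + 1), (-1) ^ τ * (k.choose τ) *
      ∏ ℓ ∈ Finset.univ.erase (0 : Fin (N + 1)), (γ ℓ + (τ : K)) / (γ ℓ - γ 0) with hcdef
  have hb1 : ∀ ℓ, ∑ j : Fin (N + 1), c (j : ℕ) * (ascPochhammer K (j : ℕ)).eval (γ ℓ) =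
      if ℓ = 0 then 1 else 0 := by
    intro ℓ
    have hnewton := newton K N P hPdeg
    have hc : ∀ k ∈ Finset.range (N + 1), Polynomial.C ((↑(Nat.factorial k) : K)⁻¹ *
        ∑ τ ∈ Finset.range (k + 1), (-1) ^ τ * (k.choose τ) * P.eval (-(τ : K))) *
          ascPochhammer K k = Polynomial.C (c k) * ascPochhammer K k := by
      intro k _
      congr 2
      rw [hcdef]
      refine congrArg _ (Finset.sum_congr rfl fun τ _ => ?_)
      rw [hPneg]
    rw [Finset.sum_congr rfl hc] at hnewton
    have heval : ∑ j : Fin (N + 1), c (j : ℕ) * (ascPochhammer K (j : ℕ)).eval (γ ℓ) =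
        P.eval (γ ℓ) := by
      conv_rhs => rw [hnewton]
      rw [Polynomial.eval_finset_sum]
      rw [← Fin.sum_univ_eq_sum_range
        (fun k => (Polynomial.C (c k) * ascPochhammer K k).eval (γ ℓ)) (N + 1)]
      refine Finset.sum_congr rfl fun j _ => ?_
      rw [Polynomial.eval_mul, Polynomial.eval_C]
    rw [heval]
    by_cases hℓ : ℓ = 0
    · rw [hℓ, if_pos rfl, hP0]
    · rw [if_neg hℓ, hPℓ ℓ hℓ]
  refine ⟨fun j => c (j : ℕ), hb1, ?_, ?_⟩
  · -- the formula
    intro k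
    rw [hcdef]
    have hne : ((Nat.factorial (k : ℕ) : K)) ≠ 0 := by
      exact_mod_cast Nat.factorial_ne_zero (k : ℕ)
    rw [← mul_assoc, mul_inv_cancel₀ hne, one_mul]
  · -- uniqueness
    intro b' hb'
    have hd : ∀ ℓ, ∑ j : Fin (N + 1),
        (b' j - c (j : ℕ)) * (ascPochhammer K (j : ℕ)).eval (γ ℓ) = 0 := by
      intro ℓ
      have : ∀ j : Fin (N + 1), (b' j - c (j : ℕ)) * (ascPochhammer K (j : ℕ)).eval (γ ℓ) =
          b' j * (ascPochhammer K (j : ℕ)).eval (γ ℓ) -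
          c (j : ℕ) * (ascPochhammer K (j : ℕ)).eval (γ ℓ) := fun j => by ring
      rw [Finset.sum_congr rfl fun j _ => this j, Finset.sum_sub_distrib, hb' ℓ, hb1 ℓ, sub_self]
    have h0 := homog K N γ hγ _ hd
    funext j
    have := congrFun h0 j
    simpa [sub_eq_zero] using this
end
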